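/- arXiv:0902.2144 — 3 statements merged into one kernel-verified Lean document; each statement's English description precedes it below -/
import Mathlib

section
/- Let P be a shrub on a finite set I. If a and a' are two vertices of the same height, and there exists a vertex b together with a directed path from b down to a and a directed path from b down to a', then there exists a vertex b' with edges covering both a and a', i.e. b' covers a and b' covers a'. -/
/-- A shrub on a finite vertex type `V`: a graph together with a height function
satisfying the shrub axioms (edges between consecutive heights, every positive-height
vertex covers a vertex one lower, and the two forbidden induced patterns). -/
structure Shrub (V : Type*) [Fintype V] [DecidableEq V] where
  adj : V → V → Prop
  symm : ∀ a b, adj a b → adj b a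
  loopless : ∀ a, ¬ adj a a
  height : V → ℕ
  edge_height : ∀ a b, adj a b → height a = height b + 1 ∨ height b = height a + 1
  covers_below : ∀ a, 0 < height a → ∃ b, adj a b ∧ height b + 1 = height a
  patternA : ∀ a b c d e, a ≠ b → c ≠ d → c ≠ e → d ≠ e →
    height a = height c + 1 → height b = height c + 1 →
    height d = height c → height e = height c →
    adj a c → adj a d → adj b d → adj b e → ¬ adj a e → ¬ adj b c → False
  patternB : ∀ a b c d, b ≠ c →
    height a = height d + 2 → height b = height d + 1 → height c = height d + 1 →
    adj a b → adj a c → adj b d → ¬ adj c d → False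

variable {V : Type*} [Fintype V] [DecidableEq V]

/-- `P.Covers j i` means the vertex `j` covers `i` : they are joined by an edge and
`j` is one level higher than `i` (edges are oriented downward). -/
def Shrub.Covers (P : Shrub V) (j i : V) : Prop :=
  P.adj i j ∧ P.height i + 1 = P.height j

/-- The underlying simple graph of a shrub. -/
def Shrub.graph (P : Shrub V) : SimpleGraph V where
  Adj := P.adj
  symm := by constructor; intro a b h; exact P.symm a b h
  loopless := by constructor; intro a h; exact P.loopless a h

lemma Shrub.descend (P : Shrub V) {b a : V}
    (h : Relation.TransGen (fun x y => P.Covers x y) b a) :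
    P.height a < P.height b := by
  induction h with
  | single h => have := h.2; omega
  | tail _ h ih => have := h.2; omega

lemma Shrub.refl_eq (P : Shrub V) {b c : V}
    (h : Relation.ReflTransGen (fun x y => P.Covers x y) b c)
    (hh : P.height c = P.height b) : b = c := by
  rcases (Relation.reflTransGen_iff_eq_or_transGen).mp h with h' | h'
  · exact h'.symm
  · exact absurd hh (by have := P.descend h'; omega)

lemma Shrub.key (P : Shrub V) (b : V) : ∀ n (a a' : V),
    P.height b = P.height a + n → P.height a = P.height a' →
    Relation.TransGen (fun x y => P.Covers x y) b a →
    Relation.TransGen (fun x y => P.Covers x y) b a' →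
    ∃ b', P.Covers b' a ∧ P.Covers b' a' := by
  intro n
  induction n with
  | zero => intro a a' hn _ h1 _; exact absurd hn (by have := P.descend h1; omega)
  | succ n ih =>
    intro a a' hn hh h1 h2
    obtain ⟨c, hbc, hca⟩ := (Relation.TransGen.tail'_iff).mp h1
    obtain ⟨c', hbc', hca'⟩ := (Relation.TransGen.tail'_iff).mp h2
    by_cases hcc : c = c'
    · exact ⟨c, hca, hcc ▸ hca'⟩
    · have hhc : P.height c = P.height a + 1 := hca.2.symm
      have hhc' : P.height c' = P.height a + 1 := by have := hca'.2; omega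
      have hbne : b ≠ c := by
        rintro rfl
        exact hcc (P.refl_eq hbc' (by omega))
      have hbne' : b ≠ c' := by
        rintro rfl
        exact hcc ((P.refl_eq hbc (by omega)).symm)
      have t1 : Relation.TransGen (fun x y => P.Covers x y) b c :=
        ((Relation.reflTransGen_iff_eq_or_transGen).mp hbc).resolve_left
          (fun h => hbne h.symm)
      have t2 : Relation.TransGen (fun x y => P.Covers x y) b c' :=
        ((Relation.reflTransGen_iff_eq_or_transGen).mp hbc').resolve_left
          (fun h => hbne' h.symm)
      obtain ⟨d, hdc, hdc'⟩ := ih c c' (by omega) (by omega) t1 t2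
      have hda : P.adj c' a := by
        by_contra hne
        exact P.patternB d c c' a hcc (by have := hdc.2; omega) hhc hhc'
          (P.symm _ _ hdc.1) (P.symm _ _ hdc'.1) (P.symm _ _ hca.1) hne
      exact ⟨c', ⟨P.symm _ _ hda, by omega⟩, hca'⟩

/-- if `a` and `a'` have the same height and some vertex `b` admits a
(nonempty) descending path of covering relations to `a` and one to `a'`, then some
vertex `b'` covers both `a` and `a'`. -/
theorem stmt0 (P : Shrub V) (a a' : V) (hh : P.height a = P.height a')
    (b : V) (h1 : Relation.TransGen (fun x y => P.Covers x y) b a)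
    (h2 : Relation.TransGen (fun x y => P.Covers x y) b a') :
    ∃ b', P.Covers b' a ∧ P.Covers b' a' := by
  exact P.key b (P.height b - P.height a) a a' (by have := P.descend h1; omega) hh h1 h2
end

section
/- The partial compositions ∘_i on shrubs (substitution of a shrub P' at a vertex i of a shrub P, joining each neighbor of i in P to every height-0 vertex of P' and shifting heights of P' by h_P(i)) satisfy the operad axioms: the single-vertex shrub is a unit; for disjoint vertices i, j of P, (P ∘_i P') ∘_j P'' = (P ∘_j P'') ∘_i P'; and for i ∈ P and i' ∈ P', (P ∘_i P') ∘_{i'} P'' = P ∘_i (P' ∘_{i'} P''). -/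
/-- A shrub on a finite set `I ⊆ ℕ` of labels: a graph supported on `I` with a
height function satisfying the shrub axioms. -/
structure ShrubOn (I : Finset ℕ) where
  adj : ℕ → ℕ → Prop
  supp : ∀ a b, adj a b → a ∈ I ∧ b ∈ I
  symm : ∀ a b, adj a b → adj b a
  loopless : ∀ a, ¬ adj a a
  height : ℕ → ℕ
  edge_height : ∀ a b, adj a b → height a = height b + 1 ∨ height b = height a + 1
  covers_below : ∀ a ∈ I, 0 < height a → ∃ b, adj a b ∧ height b + 1 = height a
  patternA : ∀ a b c d e, a ≠ b → c ≠ d → c ≠ e → d ≠ e →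
    height a = height c + 1 → height b = height c + 1 →
    height d = height c → height e = height c →
    adj a c → adj a d → adj b d → adj b e → ¬ adj a e → ¬ adj b c → False
  patternB : ∀ a b c d, b ≠ c →
    height a = height d + 2 → height b = height d + 1 → height c = height d + 1 →
    adj a b → adj a c → adj b d → ¬ adj c d → False

/-- `Q` is the partial composition `P ∘ᵢ P'` : the disjoint union of `P` minus `i`
and `P'`, where every former `P`-neighbor of `i` is joined to every height-0 vertex
of `P'`, and the heights of `P'` are shifted by the height of `i` in `P`. -/
def IsComp {I J : Finset ℕ} (P : ShrubOn I) (i : ℕ) (P' : ShrubOn J)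
    {K : Finset ℕ} (Q : ShrubOn K) : Prop :=
  K = (I.erase i) ∪ J ∧
  (∀ a b, Q.adj a b ↔ ((P.adj a b ∧ a ≠ i ∧ b ≠ i) ∨ P'.adj a b ∨
    (P.adj a i ∧ b ∈ J ∧ P'.height b = 0) ∨ (P.adj b i ∧ a ∈ J ∧ P'.height a = 0))) ∧
  (∀ a ∈ I.erase i, Q.height a = P.height a) ∧
  (∀ b ∈ J, Q.height b = P'.height b + P.height i)

/-- Two shrubs (on a priori different label sets) are the same. -/
def ShrubOn.SameAs {K K' : Finset ℕ} (Q : ShrubOn K) (R : ShrubOn K') : Prop :=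
  K = K' ∧ (∀ a b, Q.adj a b ↔ R.adj a b) ∧ ∀ a ∈ K, Q.height a = R.height a

set_option maxHeartbeats 2000000 in
/-- the partial compositions of shrubs satisfy the operad axioms:
the one-vertex shrub is a (two-sided) unit, and the parallel and series
associativity axioms hold. -/
theorem stmt9 :
    (∀ (I : Finset ℕ) (P : ShrubOn I) (i : ℕ), i ∈ I →
      ∀ U : ShrubOn ({i} : Finset ℕ), (∀ a b, ¬ U.adj a b) → U.height i = 0 →
        (∀ (K : Finset ℕ) (Q : ShrubOn K), IsComp P i U Q → Q.SameAs P) ∧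
        (∀ (K : Finset ℕ) (Q : ShrubOn K), IsComp U i P Q → Q.SameAs P)) ∧
    (∀ (I J₁ J₂ : Finset ℕ) (P : ShrubOn I) (P₁ : ShrubOn J₁) (P₂ : ShrubOn J₂)
      (i j : ℕ), i ∈ I → j ∈ I → i ≠ j →
      Disjoint I J₁ → Disjoint I J₂ → Disjoint J₁ J₂ →
      ∀ (K₁ K₂ L₁ L₂ : Finset ℕ) (Q₁ : ShrubOn K₁) (Q₂ : ShrubOn K₂)
        (R₁ : ShrubOn L₁) (R₂ : ShrubOn L₂),
        IsComp P i P₁ Q₁ → IsComp Q₁ j P₂ Q₂ →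
        IsComp P j P₂ R₁ → IsComp R₁ i P₁ R₂ → Q₂.SameAs R₂) ∧
    (∀ (I J L : Finset ℕ) (P : ShrubOn I) (P' : ShrubOn J) (P'' : ShrubOn L)
      (i i' : ℕ), i ∈ I → i' ∈ J →
      Disjoint I J → Disjoint I L → Disjoint J L →
      ∀ (K₁ K₂ M₁ M₂ : Finset ℕ) (Q₁ : ShrubOn K₁) (Q₂ : ShrubOn K₂)
        (R₁ : ShrubOn M₁) (R₂ : ShrubOn M₂),
        IsComp P i P' Q₁ → IsComp Q₁ i' P'' Q₂ →
        IsComp P' i' P'' R₁ → IsComp P i R₁ R₂ → Q₂.SameAs R₂) := by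
  refine ⟨?_, ?_, ?_⟩
  · intro I P i hi U hU hUh
    constructor
    · rintro K Q ⟨hK, hadj, h1, h2⟩
      refine ⟨?_, ?_, ?_⟩
      · rw [hK]; ext x
        simp only [Finset.mem_union, Finset.mem_erase, Finset.mem_singleton]
        rcases eq_or_ne x i with rfl | hx <;> tauto
      · intro a b
        rw [hadj a b]
        constructor
        · rintro (⟨h, _, _⟩ | h | ⟨h, hb, _⟩ | ⟨h, ha, _⟩)
          · exact h
          · exact absurd h (hU a b)
          · rw [Finset.mem_singleton] at hb; rw [hb]; exact h
          · rw [Finset.mem_singleton] at ha; rw [ha]; exact P.symm _ _ (ha ▸ h)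
        · intro h
          by_cases hb : b = i
          · exact Or.inr (Or.inr (Or.inl ⟨hb ▸ h, Finset.mem_singleton.mpr hb, hb ▸ hUh⟩))
          · by_cases ha : a = i
            · exact Or.inr (Or.inr (Or.inr ⟨ha ▸ P.symm _ _ h, Finset.mem_singleton.mpr ha, ha ▸ hUh⟩))
            · exact Or.inl ⟨h, ha, hb⟩
      · intro a ha
        rw [hK, Finset.mem_union] at ha
        rcases ha with ha | ha
        · exact h1 a ha
        · rw [Finset.mem_singleton] at ha
          rw [ha, h2 i (Finset.mem_singleton_self i), hUh, zero_add]
    · rintro K Q ⟨hK, hadj, h1, h2⟩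
      refine ⟨by rw [hK, Finset.erase_singleton, Finset.empty_union], ?_, ?_⟩
      · intro a b
        rw [hadj a b]
        simp [hU a b, hU a i, hU b i]
      · intro a ha
        rw [hK, Finset.erase_singleton, Finset.empty_union] at ha
        rw [h2 a ha, hUh, add_zero]
  · rintro I J₁ J₂ P P₁ P₂ i j hi hj hij hIJ₁ hIJ₂ hJJ K₁ K₂ L₁ L₂ Q₁ Q₂ R₁ R₂
      ⟨hK₁, aQ₁, gQ₁, gQ₁'⟩ ⟨hK₂, aQ₂, gQ₂, gQ₂'⟩ ⟨hL₁, aR₁, gR₁, gR₁'⟩ ⟨hL₂, aR₂, gR₂, gR₂'⟩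
    subst hK₁ hK₂ hL₁ hL₂
    -- membership facts
    have hiJ₁ : i ∉ J₁ := Finset.disjoint_left.mp hIJ₁ hi
    have hiJ₂ : i ∉ J₂ := Finset.disjoint_left.mp hIJ₂ hi
    have hjJ₁ : j ∉ J₁ := Finset.disjoint_left.mp hIJ₁ hj
    have hjJ₂ : j ∉ J₂ := Finset.disjoint_left.mp hIJ₂ hj
    have m1 : ∀ x, x ∈ J₁ → x ≠ i := fun x hx he => hiJ₁ (he ▸ hx)
    have m2 : ∀ x, x ∈ J₁ → x ≠ j := fun x hx he => hjJ₁ (he ▸ hx)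
    have m3 : ∀ x, x ∈ J₂ → x ≠ i := fun x hx he => hiJ₂ (he ▸ hx)
    have m4 : ∀ x, x ∈ J₂ → x ≠ j := fun x hx he => hjJ₂ (he ▸ hx)
    refine ⟨?_, ?_, ?_⟩
    · ext x
      simp only [Finset.mem_union, Finset.mem_erase]
      constructor
      · rintro ((⟨hxj, (⟨hxi, hxI⟩ | hx1)⟩) | hx2)
        · exact Or.inl ⟨hxi, Or.inl ⟨hxj, hxI⟩⟩
        · exact Or.inr hx1
        · exact Or.inl ⟨m3 x hx2, Or.inr hx2⟩
      · rintro ((⟨hxi, (⟨hxj, hxI⟩ | hx2)⟩) | hx1)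
        · exact Or.inl ⟨hxj, Or.inl ⟨hxi, hxI⟩⟩
        · exact Or.inr hx2
        · exact Or.inl ⟨m2 x hx1, Or.inr hx1⟩
    · intro a b
      have e := aQ₂ a b
      simp only [aQ₁] at e
      have f := aR₂ a b
      simp only [aR₁] at f
      rw [e, f]
      have s1 := P.supp a b
      have s2 := P₁.supp a b
      have s3 := P₂.supp a b
      have n1 : ¬ P₁.adj a j := fun h => hjJ₁ (P₁.supp a j h).2
      have n2 : ¬ P₁.adj b j := fun h => hjJ₁ (P₁.supp b j h).2
      have n3 : ¬ P₂.adj a i := fun h => hiJ₂ (P₂.supp a i h).2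
      have n4 : ¬ P₂.adj b i := fun h => hiJ₂ (P₂.supp b i h).2
      have sym : P.adj i j ↔ P.adj j i := ⟨P.symm i j, P.symm j i⟩
      have hji : ¬ j = i := fun h => hij h.symm
      have ma1 := m1 a; have ma2 := m2 a; have ma3 := m3 a; have ma4 := m4 a
      have mb1 := m1 b; have mb2 := m2 b; have mb3 := m3 b; have mb4 := m4 b
      aesop
    · intro a ha
      rcases Finset.mem_union.mp ha with hx | hx2
      · rcases Finset.mem_erase.mp hx with ⟨hxj, hx⟩
        rcases Finset.mem_union.mp hx with hxI | hx1
        · -- a ∈ I.erase i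
          rcases Finset.mem_erase.mp hxI with ⟨hxi, haI⟩
          rw [gQ₂ a (Finset.mem_erase.mpr ⟨hxj, Finset.mem_union_left _ hxI⟩), gQ₁ a hxI]
          rw [gR₂ a (Finset.mem_erase.mpr ⟨hxi, Finset.mem_union_left _ (Finset.mem_erase.mpr ⟨hxj, haI⟩)⟩),
            gR₁ a (Finset.mem_erase.mpr ⟨hxj, haI⟩)]
        · -- a ∈ J₁
          rw [gQ₂ a (Finset.mem_erase.mpr ⟨hxj, Finset.mem_union_right _ hx1⟩), gQ₁' a hx1]
          rw [gR₂' a hx1, gR₁ i (Finset.mem_erase.mpr ⟨hij, hi⟩)]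
      · -- a ∈ J₂
        rw [gQ₂' a hx2, gQ₁ j (Finset.mem_erase.mpr ⟨(Ne.symm hij), hj⟩)]
        rw [gR₂ a (Finset.mem_erase.mpr ⟨m3 a hx2, Finset.mem_union_right _ hx2⟩), gR₁' a hx2]
  · rintro I J L P P' P'' i i' hi hi' hIJ hIL hJL K₁ K₂ M₁ M₂ Q₁ Q₂ R₁ R₂
      ⟨hK₁, aQ₁, gQ₁, gQ₁'⟩ ⟨hK₂, aQ₂, gQ₂, gQ₂'⟩ ⟨hM₁, aR₁, gR₁, gR₁'⟩ ⟨hM₂, aR₂, gR₂, gR₂'⟩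
    subst hK₁ hK₂ hM₁ hM₂
    have hi'I : i' ∉ I := Finset.disjoint_right.mp hIJ hi'
    have hiJ : i ∉ J := Finset.disjoint_left.mp hIJ hi
    have hiL : i ∉ L := Finset.disjoint_left.mp hIL hi
    have hi'L : i' ∉ L := Finset.disjoint_left.mp hJL hi'
    have m1 : ∀ x, x ∈ I → x ≠ i' := fun x hx he => hi'I (he ▸ hx)
    have m2 : ∀ x, x ∈ J → x ≠ i := fun x hx he => hiJ (he ▸ hx)
    have m3 : ∀ x, x ∈ L → x ≠ i := fun x hx he => hiL (he ▸ hx)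
    have m4 : ∀ x, x ∈ L → x ≠ i' := fun x hx he => hi'L (he ▸ hx)
    -- key rewriting of the membership-height condition for R₁
    have key : ∀ x, (x ∈ J.erase i' ∪ L ∧ R₁.height x = 0) ↔
        ((x ∈ J ∧ x ≠ i' ∧ P'.height x = 0) ∨
          (x ∈ L ∧ P''.height x = 0 ∧ P'.height i' = 0)) := by
      intro x
      constructor
      · rintro ⟨hx, h0⟩
        rcases Finset.mem_union.mp hx with h | h
        · rcases Finset.mem_erase.mp h with ⟨h1, h2⟩
          have := gR₁ x h
          exact Or.inl ⟨h2, h1, by omega⟩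
        · have := gR₁' x h
          exact Or.inr ⟨h, by omega, by omega⟩
      · rintro (⟨h1, h2, h3⟩ | ⟨h1, h2, h3⟩)
        · have hm : x ∈ J.erase i' := Finset.mem_erase.mpr ⟨h2, h1⟩
          exact ⟨Finset.mem_union_left _ hm, by have := gR₁ x hm; omega⟩
        · exact ⟨Finset.mem_union_right _ h1, by have := gR₁' x h1; omega⟩
    refine ⟨?_, ?_, ?_⟩
    · ext x
      simp only [Finset.mem_union, Finset.mem_erase]
      constructor
      · rintro (⟨hxi', (⟨hxi, hxI⟩ | hxJ)⟩ | hxL)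
        · exact Or.inl ⟨hxi, hxI⟩
        · exact Or.inr (Or.inl ⟨hxi', hxJ⟩)
        · exact Or.inr (Or.inr hxL)
      · rintro (⟨hxi, hxI⟩ | ⟨hxi', hxJ⟩ | hxL)
        · exact Or.inl ⟨m1 x hxI, Or.inl ⟨hxi, hxI⟩⟩
        · exact Or.inl ⟨hxi', Or.inr hxJ⟩
        · exact Or.inr hxL
    · intro a b
      have e := aQ₂ a b
      simp only [aQ₁] at e
      have f := aR₂ a b
      simp only [aR₁] at f
      rw [key a, key b] at f
      rw [e, f]
      have s1 := P.supp a b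
      have s2 := P'.supp a b
      have s3 := P''.supp a b
      have n1 : ¬ P.adj a i' := fun h => hi'I (P.supp a i' h).2
      have n2 : ¬ P.adj b i' := fun h => hi'I (P.supp b i' h).2
      have n3 : ¬ P.adj i' i := fun h => hi'I (P.supp i' i h).1
      have n4 : P.adj a i → a ∈ I := fun h => (P.supp a i h).1
      have n5 : P.adj b i → b ∈ I := fun h => (P.supp b i h).1
      have n6 : P'.adj a i' → a ∈ J := fun h => (P'.supp a i' h).1
      have n7 : P'.adj b i' → b ∈ J := fun h => (P'.supp b i' h).1
      have ma1 := m1 a; have ma2 := m2 a; have ma3 := m3 a; have ma4 := m4 a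
      have mb1 := m1 b; have mb2 := m2 b; have mb3 := m3 b; have mb4 := m4 b
      have hii' : ¬ i = i' := fun h => hi'I (h ▸ hi)
      have hi'i : ¬ i' = i := fun h => hii' h.symm
      aesop
    · intro a ha
      rcases Finset.mem_union.mp ha with hx | hxL
      · rcases Finset.mem_erase.mp hx with ⟨hxi', hx⟩
        rcases Finset.mem_union.mp hx with hxI | hxJ
        · rcases Finset.mem_erase.mp hxI with ⟨hxi, haI⟩
          rw [gQ₂ a (Finset.mem_erase.mpr ⟨hxi', Finset.mem_union_left _ hxI⟩), gQ₁ a hxI,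
            gR₂ a hxI]
        · have haM₁ : a ∈ J.erase i' ∪ L :=
            Finset.mem_union_left _ (Finset.mem_erase.mpr ⟨hxi', hxJ⟩)
          rw [gQ₂ a (Finset.mem_erase.mpr ⟨hxi', Finset.mem_union_right _ hxJ⟩), gQ₁' a hxJ,
            gR₂' a haM₁, gR₁ a (Finset.mem_erase.mpr ⟨hxi', hxJ⟩)]
      · have haM₁ : a ∈ J.erase i' ∪ L := Finset.mem_union_right _ hxL
        rw [gQ₂' a hxL, gQ₁' i' hi', gR₂' a haM₁, gR₁' a hxL, add_assoc]
end

section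
/- In the mould operad, where Mould(I) is the field of rational functions in variables (u_i)_{i∈I} and f ∘_i g = (∑_{j∈J} u_j) · g · f|_{u_i = ∑_{j∈J} u_j}, the composition is associative in both senses: (f ∘_i g) ∘_j h = (f ∘_j h) ∘_i g for distinct i, j in the index set of f, and (f ∘_i g) ∘_{i'} h = f ∘_i (g ∘_{i'} h) for i' in the index set of g. -/
open MvPolynomial in
/-- The ambient field of moulds: rational functions in the variables `u_j`, `j : ℕ`. -/
noncomputable abbrev M := FractionRing (MvPolynomial ℕ ℚ)

/-- The inclusion of polynomials into the field of rational functions. -/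
noncomputable def toM : MvPolynomial ℕ ℚ →+* M :=
  algebraMap (MvPolynomial ℕ ℚ) M

/-- Substitution of the polynomial `s` for the variable `u_i` in a polynomial. -/
noncomputable def psubst (i : ℕ) (s : MvPolynomial ℕ ℚ) :
    MvPolynomial ℕ ℚ →ₐ[ℚ] MvPolynomial ℕ ℚ :=
  MvPolynomial.aeval (fun j => if j = i then s else MvPolynomial.X j)

/-- The sum `∑_{j ∈ J} u_j`. -/
noncomputable def sumJ (J : Finset ℕ) : MvPolynomial ℕ ℚ :=
  ∑ j ∈ J, MvPolynomial.X j

/-- A rational function is supported on the variable set `I` if it is a quotient of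
polynomials whose variables lie in `I`. -/
def MSupported (f : M) (I : Finset ℕ) : Prop :=
  ∃ p q : MvPolynomial ℕ ℚ, q ≠ 0 ∧ p.vars ⊆ I ∧ q.vars ⊆ I ∧ f = toM p / toM q

/-- `MComp f i J g h` : `h` is the mould composition
`f ∘_i g = (∑_{j∈J} u_j) · g · f|_{u_i = ∑_{j∈J} u_j}`, where `g` is a mould in the
variables `J`, computed on a fraction presentation `f = p/q`. -/
def MComp (f : M) (i : ℕ) (J : Finset ℕ) (g h : M) : Prop :=
  ∃ p q : MvPolynomial ℕ ℚ, q ≠ 0 ∧ psubst i (sumJ J) q ≠ 0 ∧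
    f = toM p / toM q ∧
    h = toM (sumJ J) * g * (toM (psubst i (sumJ J) p) / toM (psubst i (sumJ J) q))

open MvPolynomial

lemma toM_injective : Function.Injective (toM : MvPolynomial ℕ ℚ → M) :=
  IsFractionRing.injective _ _

lemma toM_ne_zero {p : MvPolynomial ℕ ℚ} (h : p ≠ 0) : toM p ≠ 0 :=
  fun h0 => h (toM_injective (by simpa using h0))

lemma psubst_X_self (i : ℕ) (s : MvPolynomial ℕ ℚ) : psubst i s (X i) = s := by
  simp [psubst]

lemma psubst_X_ne (i : ℕ) (s : MvPolynomial ℕ ℚ) {j : ℕ} (h : j ≠ i) :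
    psubst i s (X j) = X j := by
  simp [psubst, h]

lemma psubst_congr {F G : MvPolynomial ℕ ℚ →ₐ[ℚ] MvPolynomial ℕ ℚ}
    {p : MvPolynomial ℕ ℚ} (h : ∀ m ∈ p.vars, F (X m) = G (X m)) : F p = G p := by
  have hC : (F : MvPolynomial ℕ ℚ →+* MvPolynomial ℕ ℚ).comp C
      = (G : MvPolynomial ℕ ℚ →+* MvPolynomial ℕ ℚ).comp C := by
    ext r
    simp only [RingHom.comp_apply, RingHom.coe_coe]
    rw [← MvPolynomial.algebraMap_eq, F.commutes, G.commutes]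
  exact MvPolynomial.hom_congr_vars hC (fun m hm _ => h m hm) rfl

lemma psubst_notMem {i : ℕ} {s p : MvPolynomial ℕ ℚ} (h : i ∉ p.vars) :
    psubst i s p = p := by
  have := psubst_congr (F := psubst i s) (G := AlgHom.id ℚ _) (p := p)
    (fun m hm => by
      have : m ≠ i := fun e => h (e ▸ hm)
      simp [psubst_X_ne _ _ this])
  simpa using this

lemma vars_sumJ (J : Finset ℕ) : (sumJ J).vars ⊆ J := by
  classical
  refine (vars_sum_subset _ _).trans ?_
  intro m hm
  simp only [Finset.mem_biUnion] at hm
  obtain ⟨j, hj, hmj⟩ := hm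
  rw [vars_X] at hmj
  simpa [Finset.mem_singleton.mp hmj] using hj

lemma vars_psubst {i : ℕ} {s p : MvPolynomial ℕ ℚ} :
    (psubst i s p).vars ⊆ p.vars ∪ s.vars := by
  classical
  have h1 : (psubst i s p).vars ⊆ p.vars.biUnion
      fun m => ((fun j => if j = i then s else X j) m).vars :=
    vars_bind₁ _ p
  refine h1.trans (Finset.biUnion_subset.mpr fun m hm => ?_)
  by_cases hmi : m = i
  · simp only [hmi, if_pos rfl]
    exact Finset.subset_union_right
  · simp only [if_neg hmi, vars_X]
    exact fun n hn => Finset.mem_union_left _ (by simpa [Finset.mem_singleton.mp hn] using hm)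

lemma psubst_sumJ_ne_zero {i : ℕ} {J : Finset ℕ} (hJ : J.Nonempty) (hiJ : i ∉ J)
    {p : MvPolynomial ℕ ℚ} (hp : p ≠ 0) (hpv : ∀ m ∈ p.vars, m ∉ J) :
    psubst i (sumJ J) p ≠ 0 := by
  obtain ⟨j0, hj0⟩ := hJ
  set τ := psubst j0 (X i - ∑ j ∈ J.erase j0, X j) with hτ
  have key : τ (psubst i (sumJ J) p) = p := by
    have heq : (τ.comp (psubst i (sumJ J))) p = (AlgHom.id ℚ _) p := by
      apply psubst_congr
      intro m hm
      simp only [AlgHom.comp_apply, AlgHom.id_apply]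
      by_cases hmi : m = i
      · rw [hmi, psubst_X_self,
          show (sumJ J : MvPolynomial ℕ ℚ) = ∑ j ∈ J, X j from rfl, map_sum,
          ← Finset.add_sum_erase _ _ hj0, hτ, psubst_X_self]
        have hrest : ∑ j ∈ J.erase j0, psubst j0 (X i - ∑ j ∈ J.erase j0, X j) (X j)
            = ∑ j ∈ J.erase j0, X j :=
          Finset.sum_congr rfl fun j hj => psubst_X_ne _ _ (Finset.ne_of_mem_erase hj)
        rw [hrest]
        ring
      · have hmj0 : m ≠ j0 := fun e => hpv m hm (e ▸ hj0)
        rw [psubst_X_ne _ _ hmi, hτ, psubst_X_ne _ _ hmj0]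
    simpa using heq
  intro h0
  exact hp (by rw [← key, h0, map_zero])

lemma psubst_comm {i j : ℕ} {s t : MvPolynomial ℕ ℚ} (hij : i ≠ j)
    (hjs : j ∉ s.vars) (hit : i ∉ t.vars) (p : MvPolynomial ℕ ℚ) :
    psubst j t (psubst i s p) = psubst i s (psubst j t p) := by
  have : ((psubst j t).comp (psubst i s)) p = ((psubst i s).comp (psubst j t)) p := by
    apply psubst_congr
    intro m _
    simp only [AlgHom.comp_apply]
    by_cases hmi : m = i
    · rw [hmi, psubst_X_self i s, psubst_notMem hjs, psubst_X_ne j t hij,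
        psubst_X_self i s]
    · by_cases hmj : m = j
      · rw [hmj, psubst_X_ne i s (Ne.symm hij), psubst_X_self j t,
          psubst_notMem hit]
      · rw [psubst_X_ne i s hmi, psubst_X_ne j t hmj, psubst_X_ne i s hmi]
  exact this

lemma psubst_sumJ_sumJ {i' : ℕ} {J K : Finset ℕ} (hi' : i' ∈ J)
    (hJK : Disjoint J K) :
    psubst i' (sumJ K) (sumJ J) = sumJ ((J.erase i') ∪ K) := by
  classical
  have hrest : ∑ j ∈ J.erase i', psubst i' (sumJ K) (X j) = ∑ j ∈ J.erase i', X j :=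
    Finset.sum_congr rfl fun j hj => psubst_X_ne _ _ (Finset.ne_of_mem_erase hj)
  rw [show (sumJ J : MvPolynomial ℕ ℚ) = ∑ j ∈ J, X j from rfl, map_sum,
    ← Finset.add_sum_erase _ _ hi', psubst_X_self, hrest,
    show (sumJ (J.erase i' ∪ K) : MvPolynomial ℕ ℚ) = ∑ j ∈ J.erase i' ∪ K, X j from rfl,
    Finset.sum_union (hJK.mono_left (Finset.erase_subset _ _)),
    show (sumJ K : MvPolynomial ℕ ℚ) = ∑ j ∈ K, X j from rfl]
  ring

lemma comp_val {f g x : M} {i : ℕ} {J : Finset ℕ} (hc : MComp f i J g x)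
    {p q : MvPolynomial ℕ ℚ} (hq : q ≠ 0) (hσq : psubst i (sumJ J) q ≠ 0)
    (hf : f = toM p / toM q) :
    x = toM (sumJ J) * g *
      (toM (psubst i (sumJ J) p) / toM (psubst i (sumJ J) q)) := by
  obtain ⟨p1, q1, hq1, hσq1, hf1, hx⟩ := hc
  rw [hx]
  congr 1
  rw [div_eq_div_iff (toM_ne_zero hσq1) (toM_ne_zero hσq)]
  have h1 : p1 * q = p * q1 := by
    have h2 := hf1.symm.trans hf
    rw [div_eq_div_iff (toM_ne_zero hq1) (toM_ne_zero hq)] at h2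
    exact toM_injective (by rw [map_mul, map_mul]; exact h2)
  have h3 := congrArg (fun r => toM (psubst i (sumJ J) r)) h1
  simpa only [map_mul] using h3

lemma comp_empty {f g x : M} {i : ℕ} (hc : MComp f i ∅ g x) : x = 0 := by
  obtain ⟨p, q, _, _, _, hx⟩ := hc
  have h0 : (sumJ (∅ : Finset ℕ)) = 0 := Finset.sum_empty
  rw [hx, h0, map_zero, zero_mul, zero_mul]

lemma comp_zero_left {g x : M} {i : ℕ} {J : Finset ℕ} (hc : MComp 0 i J g x) :
    x = 0 := by
  obtain ⟨p, q, hq, hσq, hf, hx⟩ := hc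
  have hp0 : toM p = 0 := by
    rcases div_eq_zero_iff.mp hf.symm with h1 | h1
    · exact h1
    · exact absurd h1 (toM_ne_zero hq)
  have hp : p = 0 := toM_injective (by simpa using hp0)
  rw [hx, hp, map_zero, map_zero, zero_div, mul_zero]

lemma comp_zero_g {f x : M} {i : ℕ} {J : Finset ℕ} (hc : MComp f i J 0 x) :
    x = 0 := by
  obtain ⟨p, q, _, _, _, hx⟩ := hc
  rw [hx, mul_zero, zero_mul]

lemma parallel_assoc (I J K : Finset ℕ) (f g h : M) (i j : ℕ)
    (hiI : i ∈ I) (hjI : j ∈ I) (hij : i ≠ j)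
    (hIJ : Disjoint I J) (hIK : Disjoint I K) (hJK : Disjoint J K)
    (hfI : MSupported f I) (hgJ : MSupported g J) (hhK : MSupported h K)
    (x y x' y' : M)
    (hx : MComp f i J g x) (hy : MComp x j K h y)
    (hx' : MComp f j K h x') (hy' : MComp x' i J g y') : y = y' := by
  rcases Finset.eq_empty_or_nonempty J with hJe | hJne
  · subst hJe
    have hx0 : x = 0 := comp_empty hx
    have hy0 : y = 0 := comp_zero_left (hx0 ▸ hy)
    have hy'0 : y' = 0 := comp_empty hy'
    rw [hy0, hy'0]
  rcases Finset.eq_empty_or_nonempty K with hKe | hKne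
  · subst hKe
    have hy0 : y = 0 := comp_empty hy
    have hx'0 : x' = 0 := comp_empty hx'
    have hy'0 : y' = 0 := comp_zero_left (hx'0 ▸ hy')
    rw [hy0, hy'0]
  obtain ⟨p, q, hq, hpI, hqI, hf⟩ := hfI
  obtain ⟨a, b, hb, haJ, hbJ, hg⟩ := hgJ
  obtain ⟨c, d, hd, hcK, hdK, hh⟩ := hhK
  have hiJ : i ∉ J := Finset.disjoint_left.mp hIJ hiI
  have hjK : j ∉ K := Finset.disjoint_left.mp hIK hjI
  have hiK : i ∉ K := Finset.disjoint_left.mp hIK hiI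
  have hjJ : j ∉ J := Finset.disjoint_left.mp hIJ hjI
  have hqJ : ∀ m ∈ q.vars, m ∉ J := fun m hm => Finset.disjoint_left.mp hIJ (hqI hm)
  have hqK : ∀ m ∈ q.vars, m ∉ K := fun m hm => Finset.disjoint_left.mp hIK (hqI hm)
  have hjSJ : j ∉ (sumJ J).vars := fun hmem => hjJ (vars_sumJ _ hmem)
  have hiSK : i ∉ (sumJ K).vars := fun hmem => hiK (vars_sumJ _ hmem)
  have hja : j ∉ a.vars := fun hmem => hjJ (haJ hmem)
  have hic : i ∉ c.vars := fun hmem => hiK (hcK hmem)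
  have hjb : j ∉ b.vars := fun hmem => hjJ (hbJ hmem)
  have hid : i ∉ d.vars := fun hmem => hiK (hdK hmem)
  have hσ1q : psubst i (sumJ J) q ≠ 0 := psubst_sumJ_ne_zero hJne hiJ hq hqJ
  have hσ2q : psubst j (sumJ K) q ≠ 0 := psubst_sumJ_ne_zero hKne hjK hq hqK
  have hxval := comp_val hx hq hσ1q hf
  have hx'val := comp_val hx' hq hσ2q hf
  -- presentation of x
  have hQ1ne : b * psubst i (sumJ J) q ≠ 0 := mul_ne_zero hb hσ1q
  have hxpres : x = toM (sumJ J * a * psubst i (sumJ J) p)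
      / toM (b * psubst i (sumJ J) q) := by
    rw [hxval, hg]
    simp only [map_mul]
    rw [mul_assoc, div_mul_div_comm, ← mul_div_assoc, ← mul_assoc]
  have hQ1vars : ∀ m ∈ (b * psubst i (sumJ J) q).vars, m ∉ K := by
    intro m hm
    rcases Finset.mem_union.mp (vars_mul _ _ hm) with h1 | h1
    · exact Finset.disjoint_left.mp hJK (hbJ h1)
    · rcases Finset.mem_union.mp (vars_psubst h1) with h2 | h2
      · exact hqK m h2
      · exact Finset.disjoint_left.mp hJK (vars_sumJ _ h2)
  have hσ2Q1 : psubst j (sumJ K) (b * psubst i (sumJ J) q) ≠ 0 :=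
    psubst_sumJ_ne_zero hKne hjK hQ1ne hQ1vars
  have hyval := comp_val hy hQ1ne hσ2Q1 hxpres
  -- presentation of x'
  have hQ2ne : d * psubst j (sumJ K) q ≠ 0 := mul_ne_zero hd hσ2q
  have hx'pres : x' = toM (sumJ K * c * psubst j (sumJ K) p)
      / toM (d * psubst j (sumJ K) q) := by
    rw [hx'val, hh]
    simp only [map_mul]
    rw [mul_assoc, div_mul_div_comm, ← mul_div_assoc, ← mul_assoc]
  have hQ2vars : ∀ m ∈ (d * psubst j (sumJ K) q).vars, m ∉ J := by
    intro m hm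
    rcases Finset.mem_union.mp (vars_mul _ _ hm) with h1 | h1
    · exact (Finset.disjoint_right.mp hJK) (hdK h1)
    · rcases Finset.mem_union.mp (vars_psubst h1) with h2 | h2
      · exact hqJ m h2
      · exact Finset.disjoint_right.mp hJK (vars_sumJ _ h2)
  have hσ1Q2 : psubst i (sumJ J) (d * psubst j (sumJ K) q) ≠ 0 :=
    psubst_sumJ_ne_zero hJne hiJ hQ2ne hQ2vars
  have hy'val := comp_val hy' hQ2ne hσ1Q2 hx'pres
  -- expand substitutions
  have ecp : psubst j (sumJ K) (psubst i (sumJ J) p)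
      = psubst i (sumJ J) (psubst j (sumJ K) p) := psubst_comm hij hjSJ hiSK p
  have ecq : psubst j (sumJ K) (psubst i (sumJ J) q)
      = psubst i (sumJ J) (psubst j (sumJ K) q) := psubst_comm hij hjSJ hiSK q
  have hσ12q : psubst i (sumJ J) (psubst j (sumJ K) q) ≠ 0 := by
    refine psubst_sumJ_ne_zero hJne hiJ hσ2q ?_
    intro m hm
    rcases Finset.mem_union.mp (vars_psubst hm) with h2 | h2
    · exact hqJ m h2
    · exact Finset.disjoint_right.mp hJK (vars_sumJ _ h2)
  rw [hyval, hy'val, hg, hh]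
  simp only [map_mul]
  rw [psubst_notMem hjSJ, psubst_notMem hja, psubst_notMem hiSK, psubst_notMem hic,
    psubst_notMem hjb, psubst_notMem hid, ecp, ecq]
  field_simp

lemma series_assoc (I J K : Finset ℕ) (f g h : M) (i i' : ℕ)
    (hiI : i ∈ I) (hi'J : i' ∈ J)
    (hIJ : Disjoint I J) (hIK : Disjoint I K) (hJK : Disjoint J K)
    (hfI : MSupported f I) (hgJ : MSupported g J) (hhK : MSupported h K)
    (x y z y' : M)
    (hx : MComp f i J g x) (hy : MComp x i' K h y)
    (hz : MComp g i' K h z) (hy' : MComp f i ((J.erase i') ∪ K) z y') : y = y' := by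
  rcases Finset.eq_empty_or_nonempty K with hKe | hKne
  · subst hKe
    have hy0 : y = 0 := comp_empty hy
    have hz0 : z = 0 := comp_empty hz
    have hy'0 : y' = 0 := comp_zero_g (hz0 ▸ hy')
    rw [hy0, hy'0]
  have hJne : J.Nonempty := ⟨i', hi'J⟩
  obtain ⟨p, q, hq, hpI, hqI, hf⟩ := hfI
  obtain ⟨a, b, hb, haJ, hbJ, hg⟩ := hgJ
  obtain ⟨c, d, hd, hcK, hdK, hh⟩ := hhK
  have hiJ : i ∉ J := Finset.disjoint_left.mp hIJ hiI
  have hiK : i ∉ K := Finset.disjoint_left.mp hIK hiI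
  have hi'K : i' ∉ K := Finset.disjoint_left.mp hJK hi'J
  have hi'I : i' ∉ I := Finset.disjoint_right.mp hIJ hi'J
  have hJ'ne : ((J.erase i') ∪ K).Nonempty :=
    hKne.elim fun k hk => ⟨k, Finset.mem_union_right _ hk⟩
  have hiJ' : i ∉ (J.erase i') ∪ K := by
    intro hmem
    rcases Finset.mem_union.mp hmem with h1 | h1
    · exact hiJ (Finset.mem_of_mem_erase h1)
    · exact hiK h1
  have hqJ : ∀ m ∈ q.vars, m ∉ J := fun m hm => Finset.disjoint_left.mp hIJ (hqI hm)
  have hqJ' : ∀ m ∈ q.vars, m ∉ (J.erase i') ∪ K := by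
    intro m hm hmem
    rcases Finset.mem_union.mp hmem with h1 | h1
    · exact hqJ m hm (Finset.mem_of_mem_erase h1)
    · exact Finset.disjoint_left.mp hIK (hqI hm) h1
  have hbK : ∀ m ∈ b.vars, m ∉ K := fun m hm => Finset.disjoint_left.mp hJK (hbJ hm)
  have hσ1q : psubst i (sumJ J) q ≠ 0 := psubst_sumJ_ne_zero hJne hiJ hq hqJ
  have hσ4q : psubst i (sumJ ((J.erase i') ∪ K)) q ≠ 0 :=
    psubst_sumJ_ne_zero hJ'ne hiJ' hq hqJ'
  have hσ3b : psubst i' (sumJ K) b ≠ 0 := psubst_sumJ_ne_zero hKne hi'K hb hbK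
  -- x and its presentation
  have hxval := comp_val hx hq hσ1q hf
  have hQ1ne : b * psubst i (sumJ J) q ≠ 0 := mul_ne_zero hb hσ1q
  have hxpres : x = toM (sumJ J * a * psubst i (sumJ J) p)
      / toM (b * psubst i (sumJ J) q) := by
    rw [hxval, hg]
    simp only [map_mul]
    rw [mul_assoc, div_mul_div_comm, ← mul_div_assoc, ← mul_assoc]
  have hQ1vars : ∀ m ∈ (b * psubst i (sumJ J) q).vars, m ∉ K := by
    intro m hm
    rcases Finset.mem_union.mp (vars_mul _ _ hm) with h1 | h1
    · exact hbK m h1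
    · rcases Finset.mem_union.mp (vars_psubst h1) with h2 | h2
      · exact fun hk => Finset.disjoint_left.mp hIK (hqI h2) hk
      · exact fun hk => Finset.disjoint_left.mp hJK (vars_sumJ _ h2) hk
  have hσ3Q1 : psubst i' (sumJ K) (b * psubst i (sumJ J) q) ≠ 0 :=
    psubst_sumJ_ne_zero hKne hi'K hQ1ne hQ1vars
  have hyval := comp_val hy hQ1ne hσ3Q1 hxpres
  -- composite substitution equals direct substitution on I-supported polynomials
  have hcomp : ∀ r : MvPolynomial ℕ ℚ, r.vars ⊆ I →
      psubst i' (sumJ K) (psubst i (sumJ J) r)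
        = psubst i (sumJ ((J.erase i') ∪ K)) r := by
    intro r hr
    have heq : ((psubst i' (sumJ K)).comp (psubst i (sumJ J))) r
        = psubst i (sumJ ((J.erase i') ∪ K)) r := by
      apply psubst_congr
      intro m hm
      simp only [AlgHom.comp_apply]
      by_cases hmi : m = i
      · rw [hmi, psubst_X_self, psubst_X_self, psubst_sumJ_sumJ hi'J hJK]
      · have hmi' : m ≠ i' := fun e => hi'I (e ▸ hr hm)
        rw [psubst_X_ne _ _ hmi, psubst_X_ne _ _ hmi', psubst_X_ne _ _ hmi]
    exact heq
  have hzval := comp_val hz hb hσ3b hg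
  have hy'val := comp_val hy' hq hσ4q hf
  rw [hyval, hy'val, hzval, hh]
  simp only [map_mul]
  rw [psubst_sumJ_sumJ hi'J hJK, hcomp p hpI, hcomp q hqI]
  field_simp

/-- the mould composition is associative in both senses: parallel
associativity `(f ∘_i g) ∘_j h = (f ∘_j h) ∘_i g` for distinct `i, j` in the index
set of `f`, and series associativity `(f ∘_i g) ∘_{i'} h = f ∘_i (g ∘_{i'} h)` for
`i'` in the index set of `g`. -/
theorem stmt14 :
    (∀ (I J K : Finset ℕ) (f g h : M) (i j : ℕ),
      i ∈ I → j ∈ I → i ≠ j →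
      Disjoint I J → Disjoint I K → Disjoint J K →
      MSupported f I → MSupported g J → MSupported h K →
      ∀ x y x' y' : M,
        MComp f i J g x → MComp x j K h y →
        MComp f j K h x' → MComp x' i J g y' → y = y') ∧
    (∀ (I J K : Finset ℕ) (f g h : M) (i i' : ℕ),
      i ∈ I → i' ∈ J →
      Disjoint I J → Disjoint I K → Disjoint J K →
      MSupported f I → MSupported g J → MSupported h K →
      ∀ x y z y' : M,
        MComp f i J g x → MComp x i' K h y →
        MComp g i' K h z → MComp f i ((J.erase i') ∪ K) z y' → y = y') :=
  ⟨parallel_assoc, series_assoc⟩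
end
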